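/- Let A be an m×n real matrix, b ∈ ℝ^m, p ≥ 1, γ > 0, and let (μ_k)_{k≥0} be a nondecreasing sequence of positive reals with ∑_k 1/√μ_k < ∞. Let (u^k), (v^k), (λ^k) be sequences in ℝ^n satisfying for all k: u^{k+1} minimizes w ↦ γ‖∇w‖₀ + (μ_k/2)‖w − (v^k − λ^k/μ_k)‖₂²; v^{k+1} minimizes w ↦ ‖Aw − b‖_p^p + (μ_k/2)‖w − (u^{k+1} + λ^k/μ_k)‖₂²; and λ^{k+1} = λ^k + μ_k(u^{k+1} − v^{k+1}). Then there exists a constant C > 0, independent of k, such that ‖v^{k+1} − v^k‖₂ ≤ C/√μ_k for all k; in particular (v^k) is a Cauchy sequence. -/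

import Mathlib

open Filter Topology
open scoped BigOperators

noncomputable section

/-- The jump set of a signal `x ∈ ℝⁿ`: the indices `i` with `x i ≠ x (i+1)`. -/
def jumpSet {n : ℕ} (x : Fin n → ℝ) : Set (Fin n) :=
  {i | ∃ h : (i : ℕ) + 1 < n, x i ≠ x ⟨(i : ℕ) + 1, h⟩}

/-- `‖∇x‖₀`: the number of jumps of `x`. -/
def nJumps {n : ℕ} (x : Fin n → ℝ) : ℕ := (jumpSet x).ncard

lemma aux_nJumps_le {n : ℕ} (x : Fin n → ℝ) : nJumps x ≤ n := by
  have h := Set.ncard_le_ncard (Set.subset_univ (jumpSet x)) (Set.toFinite _)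
  simpa [nJumps, Set.ncard_univ] using h

/-- Cauchy–Schwarz corollary: `|∑ f g| ≤ √(∑ f²) √(∑ g²)`. -/
lemma aux_abs_sum_mul_le {ι : Type*} [Fintype ι] (f g : ι → ℝ) :
    |∑ i, f i * g i| ≤ Real.sqrt (∑ i, f i ^ 2) * Real.sqrt (∑ i, g i ^ 2) := by
  have h := Finset.sum_mul_sq_le_sq_mul_sq Finset.univ f g
  have h1 : |∑ i, f i * g i| = Real.sqrt ((∑ i, f i * g i) ^ 2) :=
    (Real.sqrt_sq_eq_abs _).symm
  rw [h1, ← Real.sqrt_mul (by positivity)]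
  exact Real.sqrt_le_sqrt h

/-- Triangle inequality for Euclidean-type square-root sums. -/
lemma aux_sqrt_sum_sq_add {ι : Type*} [Fintype ι] (x y : ι → ℝ) :
    Real.sqrt (∑ i, (x i + y i) ^ 2) ≤
      Real.sqrt (∑ i, x i ^ 2) + Real.sqrt (∑ i, y i ^ 2) := by
  have hxy : ∑ i, x i * y i ≤ Real.sqrt (∑ i, x i ^ 2) * Real.sqrt (∑ i, y i ^ 2) :=
    (le_abs_self _).trans (aux_abs_sum_mul_le x y)
  have hexp : ∑ i, (x i + y i) ^ 2
      = (∑ i, x i ^ 2) + 2 * (∑ i, x i * y i) + ∑ i, y i ^ 2 := by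
    rw [Finset.mul_sum, ← Finset.sum_add_distrib, ← Finset.sum_add_distrib]
    exact Finset.sum_congr rfl fun i _ => by ring
  have hle : ∑ i, (x i + y i) ^ 2
      ≤ (Real.sqrt (∑ i, x i ^ 2) + Real.sqrt (∑ i, y i ^ 2)) ^ 2 := by
    rw [hexp, add_sq]
    have h1 : Real.sqrt (∑ i, x i ^ 2) ^ 2 = ∑ i, x i ^ 2 :=
      Real.sq_sqrt (by positivity)
    have h2 : Real.sqrt (∑ i, y i ^ 2) ^ 2 = ∑ i, y i ^ 2 :=
      Real.sq_sqrt (by positivity)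
    rw [h1, h2]
    nlinarith [hxy]
  calc Real.sqrt (∑ i, (x i + y i) ^ 2)
      ≤ Real.sqrt ((Real.sqrt (∑ i, x i ^ 2) + Real.sqrt (∑ i, y i ^ 2)) ^ 2) :=
        Real.sqrt_le_sqrt hle
    _ = _ := Real.sqrt_sq (by positivity)

/-- MVT inequality for rpow: `(r+δ)^p - r^p ≤ p (r+δ)^(p-1) δ`. -/
lemma aux_rpow_mvt {p : ℝ} (hp : 1 ≤ p) {r δ : ℝ} (hr : 0 ≤ r) (hδ : 0 ≤ δ) :
    (r + δ) ^ p - r ^ p ≤ p * (r + δ) ^ (p - 1) * δ := by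
  rcases eq_or_lt_of_le hδ with h0 | h0
  · simp [← h0]
  · have hderiv : ∀ x ∈ Set.Ioo r (r + δ),
        HasDerivAt (fun y : ℝ => y ^ p) (p * x ^ (p - 1)) x := fun x _ =>
      Real.hasDerivAt_rpow_const (Or.inr hp)
    have hcont : ContinuousOn (fun y : ℝ => y ^ p) (Set.Icc r (r + δ)) := by
      intro x _
      exact ((Real.hasDerivAt_rpow_const (p := p) (x := x)
        (Or.inr hp))).continuousAt.continuousWithinAt
    obtain ⟨ξ, hξ, hslope⟩ := exists_hasDerivAt_eq_slope (fun y : ℝ => y ^ p)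
      (fun x => p * x ^ (p - 1)) (by linarith) hcont hderiv
    have hξpos : 0 ≤ ξ := le_of_lt (lt_of_le_of_lt hr hξ.1)
    have heq : (r + δ) ^ p - r ^ p = p * ξ ^ (p - 1) * δ := by
      rw [show r + δ - r = δ by ring, eq_div_iff (ne_of_gt h0)] at hslope
      linarith
    rw [heq]
    have hmono : ξ ^ (p - 1) ≤ (r + δ) ^ (p - 1) :=
      Real.rpow_le_rpow hξpos (le_of_lt hξ.2) (by linarith)
    have hppos : 0 < p := by linarith
    exact mul_le_mul_of_nonneg_right (mul_le_mul_of_nonneg_left hmono hppos.le) hδ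

/-- `(x+y)^p ≤ 2^p (x^p + y^p)` for nonneg `x,y` and `p ≥ 0`. -/
lemma aux_add_rpow_le {p : ℝ} (hp : 0 ≤ p) {x y : ℝ} (hx : 0 ≤ x) (hy : 0 ≤ y) :
    (x + y) ^ p ≤ 2 ^ p * (x ^ p + y ^ p) := by
  have h1 : x + y ≤ 2 * max x y := by
    rcases le_total x y with h | h
    · simp [max_eq_right h]; linarith
    · simp [max_eq_left h]; linarith
  have h2 : (x + y) ^ p ≤ (2 * max x y) ^ p :=
    Real.rpow_le_rpow (by positivity) h1 hp
  have h3 : (2 * max x y) ^ p = 2 ^ p * (max x y) ^ p :=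
    Real.mul_rpow (by norm_num) (le_max_iff.2 (Or.inl hx))
  have h4 : (max x y) ^ p ≤ x ^ p + y ^ p := by
    rcases le_total x y with h | h
    · rw [max_eq_right h]
      have : 0 ≤ x ^ p := Real.rpow_nonneg hx p
      linarith
    · rw [max_eq_left h]
      have : 0 ≤ y ^ p := Real.rpow_nonneg hy p
      linarith
  calc (x + y) ^ p ≤ 2 ^ p * (max x y) ^ p := by rw [← h3]; exact h2
    _ ≤ 2 ^ p * (x ^ p + y ^ p) := by
        have : (0:ℝ) ≤ 2 ^ p := Real.rpow_nonneg (by norm_num) p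
        nlinarith [h4]

/-- Key subgradient-type bound for the minimizer of
`w ↦ ‖Aw-b‖ₚᵖ + (μ/2)‖w-c‖²`. -/
lemma aux_min_grad_bound {n m : ℕ} (A : Matrix (Fin m) (Fin n) ℝ) (b : Fin m → ℝ)
    (p : ℝ) (hp : 1 ≤ p) (μR : ℝ) (hμ : 0 < μR)
    (x c : Fin n → ℝ)
    (hmin : ∀ w : Fin n → ℝ,
      (∑ i, |A.mulVec x i - b i| ^ p) + μR / 2 * ∑ i, (x i - c i) ^ 2 ≤
        (∑ i, |A.mulVec w i - b i| ^ p) + μR / 2 * ∑ i, (w i - c i) ^ 2) :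
    μR * Real.sqrt (∑ i, (x i - c i) ^ 2) ≤
      ∑ i, p * (|A.mulVec x i - b i| + Real.sqrt (∑ j, A i j ^ 2)) ^ (p - 1) *
        Real.sqrt (∑ j, A i j ^ 2) := by
  have hp0 : (0:ℝ) < p := lt_of_lt_of_le one_pos hp
  set a : Fin m → ℝ := fun i => Real.sqrt (∑ j, A i j ^ 2) with hadef
  have ha : ∀ i, 0 ≤ a i := fun i => Real.sqrt_nonneg _
  set G : ℝ := ∑ i, p * (|A.mulVec x i - b i| + a i) ^ (p - 1) * a i with hGdef
  have hGnn : 0 ≤ G := Finset.sum_nonneg fun i _ => by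
    have := Real.rpow_nonneg (by positivity : (0:ℝ) ≤ |A.mulVec x i - b i| + a i) (p - 1)
    positivity
  set Q : ℝ := ∑ i, (x i - c i) ^ 2 with hQdef
  have hQnn : 0 ≤ Q := Finset.sum_nonneg fun i _ => sq_nonneg _
  set R : ℝ := Real.sqrt Q with hRdef
  have hRnn : 0 ≤ R := Real.sqrt_nonneg _
  have hR2 : R ^ 2 = Q := Real.sq_sqrt hQnn
  have hstep : ∀ t : ℝ, 0 < t → t ≤ 1 → μR * R ≤ G + μR * t / 2 := by
    intro t ht ht1
    rcases eq_or_lt_of_le hRnn with hR0 | hRpos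
    · rw [← hR0]
      have : 0 < μR * t / 2 := by positivity
      linarith
    · have hRne : R ≠ 0 := ne_of_gt hRpos
      have hQpos : 0 < Q := by rw [← hR2]; positivity
      set e : Fin n → ℝ := fun i => (c i - x i) / R with hedef
      have he2 : ∑ i, e i ^ 2 = 1 := by
        have : ∀ i, e i ^ 2 = (x i - c i) ^ 2 / R ^ 2 := by
          intro i; rw [hedef]; rw [div_pow]; congr 1; ring
        rw [Finset.sum_congr rfl fun i _ => this i, ← Finset.sum_div, ← hQdef, hR2]
        exact div_self (ne_of_gt hQpos)
      have hxe : ∑ i, (x i - c i) * e i = -R := by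
        have : ∀ i, (x i - c i) * e i = -((x i - c i) ^ 2) / R := by
          intro i; rw [hedef]; field_simp; ring
        rw [Finset.sum_congr rfl fun i _ => this i]
        rw [← Finset.sum_div]
        have : ∑ i, -((x i - c i) ^ 2) = -Q := by
          rw [hQdef, ← Finset.sum_neg_distrib]
        rw [this, ← hR2]
        field_simp
      set w : Fin n → ℝ := fun i => x i + t * e i with hwdef
      have hw : ∀ i, w i = x i + t * e i := fun i => rfl
      have hwc : ∑ i, (w i - c i) ^ 2 = Q - 2 * t * R + t ^ 2 := by
        have hterm : ∀ i, (w i - c i) ^ 2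
            = (x i - c i) ^ 2 + 2 * t * ((x i - c i) * e i) + t ^ 2 * e i ^ 2 := by
          intro i; rw [hw]; ring
        rw [Finset.sum_congr rfl fun i _ => hterm i]
        rw [Finset.sum_add_distrib, Finset.sum_add_distrib, ← Finset.mul_sum,
          ← Finset.mul_sum, hxe, he2, ← hQdef]
        ring
      have hrow : ∀ i, |A.mulVec w i - b i| ≤ |A.mulVec x i - b i| + t * a i := by
        intro i
        have hmv : A.mulVec w i = A.mulVec x i + t * ∑ j, A i j * e j := by
          simp only [Matrix.mulVec, dotProduct, hwdef]
          rw [Finset.mul_sum, ← Finset.sum_add_distrib]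
          exact Finset.sum_congr rfl fun j _ => by ring
        have hcs : |∑ j, A i j * e j| ≤ a i := by
          have h := aux_abs_sum_mul_le (fun j => A i j) e
          rw [he2, Real.sqrt_one, mul_one] at h
          exact h
        calc |A.mulVec w i - b i|
            = |(A.mulVec x i - b i) + t * ∑ j, A i j * e j| := by
              rw [hmv, show A.mulVec x i + t * (∑ j, A i j * e j) - b i
                = (A.mulVec x i - b i) + t * ∑ j, A i j * e j from by ring]
          _ ≤ |A.mulVec x i - b i| + |t * ∑ j, A i j * e j| := abs_add_le _ _
          _ ≤ |A.mulVec x i - b i| + t * a i := by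
              have : |t * ∑ j, A i j * e j| = t * |∑ j, A i j * e j| := by
                rw [abs_mul, abs_of_pos ht]
              rw [this]
              exact add_le_add (le_refl _) (mul_le_mul_of_nonneg_left hcs ht.le)
      have hterm : ∀ i, |A.mulVec w i - b i| ^ p ≤ |A.mulVec x i - b i| ^ p +
          t * (p * (|A.mulVec x i - b i| + a i) ^ (p - 1) * a i) := by
        intro i
        set s : ℝ := |A.mulVec x i - b i| with hsdef
        have hs : 0 ≤ s := abs_nonneg _
        have h1 : |A.mulVec w i - b i| ^ p ≤ (s + t * a i) ^ p :=
          Real.rpow_le_rpow (abs_nonneg _) (hrow i) hp0.le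
        have h2 : (s + t * a i) ^ p - s ^ p ≤ p * (s + t * a i) ^ (p - 1) * (t * a i) :=
          aux_rpow_mvt hp hs (mul_nonneg ht.le (ha i))
        have h3 : (s + t * a i) ^ (p - 1) ≤ (s + a i) ^ (p - 1) := by
          apply Real.rpow_le_rpow (by positivity)
          · have : t * a i ≤ a i := by
              nlinarith [ha i]
            linarith
          · linarith
        have h4 : p * (s + t * a i) ^ (p - 1) * (t * a i)
            ≤ p * (s + a i) ^ (p - 1) * (t * a i) :=
          mul_le_mul_of_nonneg_right (mul_le_mul_of_nonneg_left h3 hp0.le)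
            (mul_nonneg ht.le (ha i))
        have h5 : p * (s + a i) ^ (p - 1) * (t * a i)
            = t * (p * (s + a i) ^ (p - 1) * a i) := by ring
        linarith
      have hfw : ∑ i, |A.mulVec w i - b i| ^ p
          ≤ (∑ i, |A.mulVec x i - b i| ^ p) + t * G := by
        calc ∑ i, |A.mulVec w i - b i| ^ p
            ≤ ∑ i, (|A.mulVec x i - b i| ^ p +
                t * (p * (|A.mulVec x i - b i| + a i) ^ (p - 1) * a i)) :=
              Finset.sum_le_sum fun i _ => hterm i
          _ = (∑ i, |A.mulVec x i - b i| ^ p) + t * G := by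
              rw [Finset.sum_add_distrib, ← Finset.mul_sum, hGdef]
      have h := hmin w
      rw [hwc] at h
      have hmul : (μR * R) * t ≤ (G + μR * t / 2) * t := by nlinarith [h, hfw]
      exact le_of_mul_le_mul_right hmul ht
  have hlim : ∀ ε > 0, μR * R - ε ≤ G := by
    intro ε hε
    have htpos : 0 < min 1 (ε / μR) := lt_min one_pos (div_pos hε hμ)
    have h := hstep (min 1 (ε / μR)) htpos (min_le_left _ _)
    have : μR * min 1 (ε / μR) ≤ ε := by
      have h1 : min 1 (ε / μR) ≤ ε / μR := min_le_right _ _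
      calc μR * min 1 (ε / μR) ≤ μR * (ε / μR) := mul_le_mul_of_nonneg_left h1 hμ.le
        _ = ε := by field_simp
    linarith
  exact le_of_forall_sub_le hlim

set_option maxHeartbeats 1000000 in
/-- Along the iPotts ADMM iteration, there is a constant `C > 0` independent
of `k` with `‖v^{k+1} − v^k‖₂ ≤ C/√μ_k` for all `k`; in particular `(v^k)` is
a Cauchy sequence. -/
theorem admm_v_cauchy (n m : ℕ)
    (A : Matrix (Fin m) (Fin n) ℝ) (b : Fin m → ℝ)
    (p γ : ℝ) (hp : 1 ≤ p) (hγ : 0 < γ)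
    (μ : ℕ → ℝ) (hμpos : ∀ k, 0 < μ k) (hμmono : Monotone μ)
    (hμsum : Summable fun k => 1 / Real.sqrt (μ k))
    (u v lam : ℕ → Fin n → ℝ)
    (hu : ∀ k : ℕ, ∀ w : Fin n → ℝ,
      γ * (nJumps (u (k + 1)) : ℝ) +
          μ k / 2 * ∑ i, (u (k + 1) i - (v k i - lam k i / μ k)) ^ 2 ≤
        γ * (nJumps w : ℝ) + μ k / 2 * ∑ i, (w i - (v k i - lam k i / μ k)) ^ 2)
    (hv : ∀ k : ℕ, ∀ w : Fin n → ℝ,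
      (∑ i, |A.mulVec (v (k + 1)) i - b i| ^ p) +
          μ k / 2 * ∑ i, (v (k + 1) i - (u (k + 1) i + lam k i / μ k)) ^ 2 ≤
        (∑ i, |A.mulVec w i - b i| ^ p) +
          μ k / 2 * ∑ i, (w i - (u (k + 1) i + lam k i / μ k)) ^ 2)
    (hlam : ∀ k : ℕ, lam (k + 1) = lam k + μ k • (u (k + 1) - v (k + 1))) :
    ∃ C : ℝ, 0 < C ∧
      (∀ k : ℕ, Real.sqrt (∑ i, (v (k + 1) i - v k i) ^ 2) ≤ C / Real.sqrt (μ k)) ∧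
      CauchySeq v := by
  have hp0 : (0:ℝ) < p := lt_of_lt_of_le one_pos hp
  have hγn : (0:ℝ) ≤ γ * n := by positivity
  set a : Fin m → ℝ := fun i => Real.sqrt (∑ j, A i j ^ 2) with hadef
  have ha : ∀ i, 0 ≤ a i := fun i => Real.sqrt_nonneg _
  set α : ℝ := 1 + ∑ i, a i with hαdef
  have hα1 : 1 ≤ α := by
    have h0 : 0 ≤ ∑ i, a i := Finset.sum_nonneg fun i _ => ha i
    rw [hαdef]; linarith
  have hα0 : 0 < α := lt_of_lt_of_le one_pos hα1
  have haα : ∀ i, a i ≤ α := by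
    intro i
    have h1 : a i ≤ ∑ j, a j := Finset.single_le_sum (fun j _ => ha j) (Finset.mem_univ i)
    rw [hαdef]; linarith
  have h2p : (0:ℝ) ≤ 2 ^ p := Real.rpow_nonneg (by norm_num) p
  have hαp : (0:ℝ) ≤ α ^ p := Real.rpow_nonneg hα0.le p
  have hfnn : ∀ w : Fin n → ℝ, 0 ≤ ∑ i, |A.mulVec w i - b i| ^ p := fun w =>
    Finset.sum_nonneg fun i _ => Real.rpow_nonneg (abs_nonneg _) p
  -- quadratic bound from the u-step
  have hD : ∀ k, μ k / 2 * ∑ i, (v k i - (u (k + 1) i + lam k i / μ k)) ^ 2 ≤ γ * n := by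
    intro k
    have h := hu k (fun i => v k i - lam k i / μ k)
    have hz : ∑ i, ((fun i => v k i - lam k i / μ k) i - (v k i - lam k i / μ k)) ^ 2
        = (0:ℝ) := by simp
    rw [hz, mul_zero, add_zero] at h
    have hJw : γ * ((nJumps (fun i => v k i - lam k i / μ k) : ℕ) : ℝ) ≤ γ * n := by
      have hle := aux_nJumps_le (fun i => v k i - lam k i / μ k)
      exact mul_le_mul_of_nonneg_left (by exact_mod_cast hle) hγ.le
    have hJu : (0:ℝ) ≤ γ * (nJumps (u (k + 1)) : ℝ) := by positivity
    have hsum : ∑ i, (v k i - (u (k + 1) i + lam k i / μ k)) ^ 2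
        = ∑ i, (u (k + 1) i - (v k i - lam k i / μ k)) ^ 2 :=
      Finset.sum_congr rfl fun i _ => by ring
    rw [hsum]
    linarith
  -- one-step growth of the data term
  have hfstep : ∀ k, (∑ i, |A.mulVec (v (k + 1)) i - b i| ^ p)
      ≤ (∑ i, |A.mulVec (v k) i - b i| ^ p) + γ * n := by
    intro k
    have h := hv k (v k)
    have h2 := hD k
    have h3 : 0 ≤ μ k / 2 * ∑ i, (v (k + 1) i - (u (k + 1) i + lam k i / μ k)) ^ 2 :=
      mul_nonneg (div_nonneg (hμpos k).le (by norm_num))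
        (Finset.sum_nonneg fun i _ => sq_nonneg _)
    linarith
  -- linear growth of the data term
  have hflin : ∀ k : ℕ, (∑ i, |A.mulVec (v k) i - b i| ^ p)
      ≤ (∑ i, |A.mulVec (v 0) i - b i| ^ p) + (k : ℝ) * (γ * n) := by
    intro k
    induction k with
    | zero => simp
    | succ k ih =>
      have h := hfstep k
      push_cast
      push_cast at ih
      linarith
  -- the key subgradient bound
  have hkey : ∀ k, μ k * Real.sqrt (∑ i, (v (k + 1) i - (u (k + 1) i + lam k i / μ k)) ^ 2)
      ≤ ∑ i, p * (|A.mulVec (v (k + 1)) i - b i| + a i) ^ (p - 1) * a i := by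
    intro k
    exact aux_min_grad_bound A b p hp (μ k) (hμpos k) (v (k + 1))
      (fun i => u (k + 1) i + lam k i / μ k) (fun w => hv k w)
  -- bound the gradient-type sum by the data term
  have hGb : ∀ k, (∑ i, p * (|A.mulVec (v (k + 1)) i - b i| + a i) ^ (p - 1) * a i)
      ≤ p * α * (m * (1 + 2 ^ p * α ^ p))
        + p * α * 2 ^ p * ∑ i, |A.mulVec (v (k + 1)) i - b i| ^ p := by
    intro k
    have hterm : ∀ i : Fin m, p * (|A.mulVec (v (k + 1)) i - b i| + a i) ^ (p - 1) * a i
        ≤ p * α * (1 + 2 ^ p * α ^ p)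
          + p * α * 2 ^ p * |A.mulVec (v (k + 1)) i - b i| ^ p := by
      intro i
      set s : ℝ := |A.mulVec (v (k + 1)) i - b i| with hsdef
      have hs : 0 ≤ s := abs_nonneg _
      have hsp : 0 ≤ s ^ p := Real.rpow_nonneg hs p
      have h1 : (s + a i) ^ (p - 1) ≤ 1 + (s + a i) ^ p := by
        rcases le_total (s + a i) 1 with h | h
        · have hb1 := Real.rpow_le_one (by positivity) h (by linarith : (0:ℝ) ≤ p - 1)
          have hb2 := Real.rpow_nonneg (by positivity : (0:ℝ) ≤ s + a i) p
          linarith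
        · have hb1 := Real.rpow_le_rpow_of_exponent_le h (by linarith : p - 1 ≤ p)
          linarith
      have h2 : (s + a i) ^ p ≤ 2 ^ p * (s ^ p + α ^ p) := by
        have hb1 := aux_add_rpow_le hp0.le hs (ha i)
        have hap : a i ^ p ≤ α ^ p := Real.rpow_le_rpow (ha i) (haα i) hp0.le
        nlinarith [hb1, hap, h2p]
      have h3 : (s + a i) ^ (p - 1) ≤ 1 + 2 ^ p * s ^ p + 2 ^ p * α ^ p := by
        nlinarith [h1, h2]
      have hY : (0:ℝ) ≤ 1 + 2 ^ p * s ^ p + 2 ^ p * α ^ p := by positivity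
      calc p * (s + a i) ^ (p - 1) * a i
          ≤ (p * (1 + 2 ^ p * s ^ p + 2 ^ p * α ^ p)) * α := by
            apply mul_le_mul (mul_le_mul_of_nonneg_left h3 hp0.le) (haα i) (ha i)
            positivity
        _ = p * α * (1 + 2 ^ p * α ^ p) + p * α * 2 ^ p * s ^ p := by ring
    calc ∑ i, p * (|A.mulVec (v (k + 1)) i - b i| + a i) ^ (p - 1) * a i
        ≤ ∑ i : Fin m, (p * α * (1 + 2 ^ p * α ^ p)
            + p * α * 2 ^ p * |A.mulVec (v (k + 1)) i - b i| ^ p) :=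
          Finset.sum_le_sum fun i _ => hterm i
      _ = p * α * (m * (1 + 2 ^ p * α ^ p))
            + p * α * 2 ^ p * ∑ i, |A.mulVec (v (k + 1)) i - b i| ^ p := by
          rw [Finset.sum_add_distrib, Finset.sum_const, ← Finset.mul_sum,
            Finset.card_univ, Fintype.card_fin, nsmul_eq_mul]
          ring
  -- the constant K7 and the bound μ_k √Q_k ≤ K7 (k+1)
  set f0 : ℝ := ∑ i, |A.mulVec (v 0) i - b i| ^ p with hf0def
  have hf0nn : 0 ≤ f0 := hfnn (v 0)
  have hcoef : (0:ℝ) ≤ p * α * 2 ^ p :=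
    mul_nonneg (mul_nonneg hp0.le hα0.le) h2p
  have hc1 : (0:ℝ) ≤ p * α * (m * (1 + 2 ^ p * α ^ p)) := by
    apply mul_nonneg (mul_nonneg hp0.le hα0.le)
    apply mul_nonneg (Nat.cast_nonneg m)
    nlinarith [h2p, hαp]
  set K7 : ℝ := p * α * (m * (1 + 2 ^ p * α ^ p)) + p * α * 2 ^ p * f0
      + p * α * 2 ^ p * (γ * n) with hK7def
  have hK7nn : 0 ≤ K7 := by
    rw [hK7def]
    have := mul_nonneg hcoef hf0nn
    have := mul_nonneg hcoef hγn
    linarith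
  have hμR : ∀ k, μ k * Real.sqrt (∑ i, (v (k + 1) i - (u (k + 1) i + lam k i / μ k)) ^ 2)
      ≤ K7 * ((k : ℝ) + 1) := by
    intro k
    have h1 := hkey k
    have h2 := hGb k
    have h3 := hflin (k + 1)
    push_cast at h3
    have hknn : (0:ℝ) ≤ (k : ℝ) := Nat.cast_nonneg k
    rw [hK7def]
    have h4 : p * α * 2 ^ p * (∑ i, |A.mulVec (v (k + 1)) i - b i| ^ p)
        ≤ p * α * 2 ^ p * (f0 + ((k : ℝ) + 1) * (γ * n)) := by
      apply mul_le_mul_of_nonneg_left _ hcoef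
      rw [hf0def]
      linarith
    have h5 : (p * α * (↑m * (1 + 2 ^ p * α ^ p)) + p * α * 2 ^ p * f0) * 1
        ≤ (p * α * (↑m * (1 + 2 ^ p * α ^ p)) + p * α * 2 ^ p * f0) * ((k : ℝ) + 1) := by
      apply mul_le_mul_of_nonneg_left (by linarith)
      exact add_nonneg hc1 (mul_nonneg hcoef hf0nn)
    calc μ k * Real.sqrt (∑ i, (v (k + 1) i - (u (k + 1) i + lam k i / μ k)) ^ 2)
        ≤ ∑ i, p * (|A.mulVec (v (k + 1)) i - b i| + a i) ^ (p - 1) * a i := h1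
      _ ≤ p * α * (↑m * (1 + 2 ^ p * α ^ p))
            + p * α * 2 ^ p * ∑ i, |A.mulVec (v (k + 1)) i - b i| ^ p := h2
      _ ≤ p * α * (↑m * (1 + 2 ^ p * α ^ p))
            + p * α * 2 ^ p * (f0 + ((k : ℝ) + 1) * (γ * n)) := by linarith only [h4]
      _ ≤ (p * α * (↑m * (1 + 2 ^ p * α ^ p)) + p * α * 2 ^ p * f0
            + p * α * 2 ^ p * (γ * n)) * ((k : ℝ) + 1) := by nlinarith [h5]
  -- the sum S and the estimate (k+1)/√μ_k ≤ S
  set S : ℝ := ∑' k, 1 / Real.sqrt (μ k) with hSdef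
  have hsμ : ∀ k, 0 < Real.sqrt (μ k) := fun k => Real.sqrt_pos.2 (hμpos k)
  have hS : ∀ k : ℕ, ((k : ℝ) + 1) * (1 / Real.sqrt (μ k)) ≤ S := by
    intro k
    have h1 : ∀ j ∈ Finset.range (k + 1), 1 / Real.sqrt (μ k) ≤ 1 / Real.sqrt (μ j) := by
      intro j hj
      have hjk : μ j ≤ μ k := hμmono (Nat.le_of_lt_succ (Finset.mem_range.1 hj))
      exact one_div_le_one_div_of_le (hsμ j) (Real.sqrt_le_sqrt hjk)
    calc ((k : ℝ) + 1) * (1 / Real.sqrt (μ k))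
        = ∑ _j ∈ Finset.range (k + 1), 1 / Real.sqrt (μ k) := by
          rw [Finset.sum_const, Finset.card_range, nsmul_eq_mul]
          push_cast
          ring
      _ ≤ ∑ j ∈ Finset.range (k + 1), 1 / Real.sqrt (μ j) := Finset.sum_le_sum h1
      _ ≤ S := hμsum.sum_le_tsum _ (fun j _ => by positivity)
  have hSnn : 0 ≤ S := tsum_nonneg fun k => by positivity
  -- the constant C
  set C : ℝ := K7 * S + Real.sqrt (2 * (γ * n)) + 1 with hCdef
  have hCpos : 0 < C := by
    have h1 : 0 ≤ K7 * S := mul_nonneg hK7nn hSnn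
    have h2 := Real.sqrt_nonneg (2 * (γ * n))
    rw [hCdef]; linarith
  -- the main estimate
  have hmain : ∀ k, Real.sqrt (∑ i, (v (k + 1) i - v k i) ^ 2) ≤ C / Real.sqrt (μ k) := by
    intro k
    have htri : Real.sqrt (∑ i, (v (k + 1) i - v k i) ^ 2)
        ≤ Real.sqrt (∑ i, (v (k + 1) i - (u (k + 1) i + lam k i / μ k)) ^ 2)
          + Real.sqrt (∑ i, (v k i - (u (k + 1) i + lam k i / μ k)) ^ 2) := by
      have h1 : ∑ i, (v (k + 1) i - v k i) ^ 2
          = ∑ i, ((v (k + 1) i - (u (k + 1) i + lam k i / μ k))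
            + ((u (k + 1) i + lam k i / μ k) - v k i)) ^ 2 :=
        Finset.sum_congr rfl fun i _ => by ring
      have h2 : ∑ i, ((u (k + 1) i + lam k i / μ k) - v k i) ^ 2
          = ∑ i, (v k i - (u (k + 1) i + lam k i / μ k)) ^ 2 :=
        Finset.sum_congr rfl fun i _ => by ring
      rw [h1]
      have h3 := aux_sqrt_sum_sq_add
        (fun i => v (k + 1) i - (u (k + 1) i + lam k i / μ k))
        (fun i => (u (k + 1) i + lam k i / μ k) - v k i)
      rw [h2] at h3
      exact h3
    have hDk : Real.sqrt (∑ i, (v k i - (u (k + 1) i + lam k i / μ k)) ^ 2)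
        ≤ Real.sqrt (2 * (γ * n)) / Real.sqrt (μ k) := by
      have h := hD k
      have hle : ∑ i, (v k i - (u (k + 1) i + lam k i / μ k)) ^ 2
          ≤ 2 * (γ * n) / μ k := by
        rw [le_div_iff₀ (hμpos k)]
        linarith only [h]
      calc Real.sqrt (∑ i, (v k i - (u (k + 1) i + lam k i / μ k)) ^ 2)
          ≤ Real.sqrt (2 * (γ * n) / μ k) := Real.sqrt_le_sqrt hle
        _ = Real.sqrt (2 * (γ * n)) / Real.sqrt (μ k) :=
            Real.sqrt_div (by positivity) _
    have hQk : Real.sqrt (∑ i, (v (k + 1) i - (u (k + 1) i + lam k i / μ k)) ^ 2)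
        ≤ K7 * S / Real.sqrt (μ k) := by
      have h1 := hμR k
      have h2 := hS k
      have hμsq : Real.sqrt (μ k) * Real.sqrt (μ k) = μ k := Real.mul_self_sqrt (hμpos k).le
      have h3 : (k : ℝ) + 1 ≤ S * Real.sqrt (μ k) := by
        calc (k : ℝ) + 1 = ((k : ℝ) + 1) * (1 / Real.sqrt (μ k)) * Real.sqrt (μ k) := by
              rw [mul_assoc, one_div_mul_cancel (ne_of_gt (hsμ k)), mul_one]
          _ ≤ S * Real.sqrt (μ k) := mul_le_mul_of_nonneg_right h2 (hsμ k).le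
      rw [le_div_iff₀ (hsμ k)]
      have h4 : Real.sqrt (∑ i, (v (k + 1) i - (u (k + 1) i + lam k i / μ k)) ^ 2)
          * Real.sqrt (μ k) * Real.sqrt (μ k) ≤ K7 * S * Real.sqrt (μ k) := by
        calc Real.sqrt (∑ i, (v (k + 1) i - (u (k + 1) i + lam k i / μ k)) ^ 2)
            * Real.sqrt (μ k) * Real.sqrt (μ k)
            = μ k * Real.sqrt (∑ i, (v (k + 1) i - (u (k + 1) i + lam k i / μ k)) ^ 2) := by
              rw [mul_assoc, hμsq]; ring
          _ ≤ K7 * ((k : ℝ) + 1) := h1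
          _ ≤ K7 * (S * Real.sqrt (μ k)) := mul_le_mul_of_nonneg_left h3 hK7nn
          _ = K7 * S * Real.sqrt (μ k) := by ring
      exact le_of_mul_le_mul_right h4 (hsμ k)
    calc Real.sqrt (∑ i, (v (k + 1) i - v k i) ^ 2)
        ≤ Real.sqrt (∑ i, (v (k + 1) i - (u (k + 1) i + lam k i / μ k)) ^ 2)
          + Real.sqrt (∑ i, (v k i - (u (k + 1) i + lam k i / μ k)) ^ 2) := htri
      _ ≤ K7 * S / Real.sqrt (μ k) + Real.sqrt (2 * (γ * n)) / Real.sqrt (μ k) :=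
          add_le_add hQk hDk
      _ = (K7 * S + Real.sqrt (2 * (γ * n))) / Real.sqrt (μ k) := by
          rw [← add_div]
      _ ≤ C / Real.sqrt (μ k) := by
          apply (div_le_div_iff_of_pos_right (hsμ k)).2
          rw [hCdef]; linarith
  refine ⟨C, hCpos, hmain, ?_⟩
  -- Cauchy property
  have hdist : ∀ k, dist (v k) (v (k + 1)) ≤ C / Real.sqrt (μ k) := by
    intro k
    rw [dist_pi_le_iff (div_nonneg hCpos.le (Real.sqrt_nonneg _))]
    intro i
    have h1 : dist (v k i) (v (k + 1) i) = Real.sqrt ((v (k + 1) i - v k i) ^ 2) := by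
      rw [Real.dist_eq, abs_sub_comm, ← Real.sqrt_sq_eq_abs]
    rw [h1]
    calc Real.sqrt ((v (k + 1) i - v k i) ^ 2)
        ≤ Real.sqrt (∑ i, (v (k + 1) i - v k i) ^ 2) :=
          Real.sqrt_le_sqrt (Finset.single_le_sum
            (f := fun j => (v (k + 1) j - v k j) ^ 2)
            (fun j _ => sq_nonneg _) (Finset.mem_univ i))
      _ ≤ C / Real.sqrt (μ k) := hmain k
  apply cauchySeq_of_summable_dist
  have hsummable : Summable fun k => C / Real.sqrt (μ k) := by
    have h := hμsum.mul_left C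
    simpa only [mul_one_div] using h
  exact Summable.of_nonneg_of_le (fun k => dist_nonneg) (fun k => hdist k) hsummable
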